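/- The map C ↦ f_C is injective: if C is a bounded operator on H̃ and f_C(z) = 0 for every z ∈ B_H, then C = 0. -/

import Mathlib

/-- The extended Hilbert space `H̃ = H ⊕ ℂ` (Hilbert space direct sum). -/
noncomputable abbrev ExtH (H : Type*) [NormedAddCommGroup H] [InnerProductSpace ℂ H] :=
  WithLp 2 (H × ℂ)

/-- The element `(z, a)` of `H̃`. -/
noncomputable def mk2 {H : Type*} [NormedAddCommGroup H] [InnerProductSpace ℂ H]
    (z : H) (a : ℂ) : ExtH H :=
  (WithLp.equiv 2 (H × ℂ)).symm (z, a)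

/-- The Kähler function `f_C(z) = ⟨ẑ, C ẑ⟩/(1 − ‖z‖²)` on the Hilbert ball, where
`ẑ = (z,1) ∈ H̃`. -/
noncomputable def kahlerFun {H : Type*} [NormedAddCommGroup H] [InnerProductSpace ℂ H]
    (C : ExtH H →L[ℂ] ExtH H) (z : H) : ℂ :=
  ((1 - ‖z‖ ^ 2 : ℝ) : ℂ)⁻¹ * (inner ℂ (mk2 z 1) (C (mk2 z 1)) : ℂ)

open ComplexConjugate in
lemma expand_aux {H : Type*} [NormedAddCommGroup H] [InnerProductSpace ℂ H]
    (C : ExtH H →L[ℂ] ExtH H) (u v : ExtH H) (t : ℂ) :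
    (inner ℂ (t • u + v) (C (t • u + v)) : ℂ) =
      conj t * t * inner ℂ u (C u) + conj t * inner ℂ u (C v)
        + t * inner ℂ v (C u) + inner ℂ v (C v) := by
  simp only [map_add, map_smul, inner_add_left, inner_add_right, inner_smul_left,
    inner_smul_right]
  push_cast
  ring

/-- the map `C ↦ f_C` is injective: if `f_C` vanishes on the Hilbert ball
then `C = 0`. -/
theorem kahlerFun_injective
    {H : Type*} [NormedAddCommGroup H] [InnerProductSpace ℂ H] [CompleteSpace H]
    (C : ExtH H →L[ℂ] ExtH H) (hC : ∀ z : H, ‖z‖ < 1 → kahlerFun C z = 0) :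
    C = 0 := by
  classical
  -- first, the inner product itself vanishes on the ball
  have hinner : ∀ z : H, ‖z‖ < 1 → (inner ℂ (mk2 z 1) (C (mk2 z 1)) : ℂ) = 0 := by
    intro z hz
    have h := hC z hz
    unfold kahlerFun at h
    have hne : ((1 - ‖z‖ ^ 2 : ℝ) : ℂ)⁻¹ ≠ 0 := by
      have hpos : (0:ℝ) < 1 - ‖z‖ ^ 2 := by nlinarith [norm_nonneg z]
      exact inv_ne_zero (Complex.ofReal_ne_zero.mpr (ne_of_gt hpos))
    exact (mul_eq_zero.mp h).resolve_left hne
  have key : ∀ x : ExtH H, (inner ℂ x (C x) : ℂ) = 0 := by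
    intro x
    set w : H := (WithLp.equiv 2 (H × ℂ) x).1 with hw
    set a : ℂ := (WithLp.equiv 2 (H × ℂ) x).2 with ha
    have hx : x = mk2 w a := rfl
    set u : ExtH H := mk2 w 0 with hu
    set e : ExtH H := mk2 0 1 with he
    have hsum : ∀ t : ℂ, mk2 (t • w) 1 = t • u + e := by
      intro t
      apply (WithLp.equiv 2 (H × ℂ)).injective
      simp [hu, he, mk2]
    have hxsum : x = a • e + u := by
      apply (WithLp.equiv 2 (H × ℂ)).injective
      simp [hu, he, mk2, hw, ha]
      rfl
    set A : ℂ := inner ℂ u (C u) with hA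
    set B : ℂ := inner ℂ u (C e) with hB
    set D : ℂ := inner ℂ e (C u) with hD
    set E : ℂ := inner ℂ e (C e) with hE
    have hF : ∀ t : ℂ, ‖t‖ * ‖w‖ < 1 →
        (starRingEnd ℂ) t * t * A + (starRingEnd ℂ) t * B + t * D + E = 0 := by
      intro t ht
      have hnorm : ‖t • w‖ < 1 := by rw [norm_smul]; exact ht
      have := hinner (t • w) hnorm
      rw [hsum t, expand_aux] at this
      exact this
    set c : ℝ := (1 + ‖w‖)⁻¹ with hc
    have hcpos : 0 < c := by positivity
    have hcw : c * ‖w‖ < 1 := by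
      rw [hc, inv_mul_lt_iff₀ (by positivity)]
      nlinarith [norm_nonneg w]
    have h0 : E = 0 := by
      have := hF 0 (by simpa using zero_lt_one)
      simpa using this
    have h1 := hF (c : ℂ) (by simpa [Complex.norm_real, abs_of_pos hcpos] using hcw)
    have h2 := hF (-(c : ℂ)) (by simpa [Complex.norm_real, abs_of_pos hcpos] using hcw)
    have h3 := hF (Complex.I * (c : ℂ)) (by
      simpa [Complex.norm_real, abs_of_pos hcpos] using hcw)
    simp only [map_neg, map_mul, Complex.conj_I, Complex.conj_ofReal, h0, add_zero] at h1 h2 h3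
    have hcne : ((c : ℝ) : ℂ) ≠ 0 := by
      exact_mod_cast Complex.ofReal_ne_zero.mpr (ne_of_gt hcpos)
    have hAzero : A = 0 := by
      have hsum2 : ((c : ℝ) : ℂ) * ((c : ℝ) : ℂ) * A * 2 = 0 := by linear_combination h1 + h2
      have := mul_eq_zero.mp hsum2
      rcases this with h | h
      · rcases mul_eq_zero.mp h with h' | h'
        · rcases mul_eq_zero.mp h' with h'' | h''
          · exact absurd h'' hcne
          · exact absurd h'' hcne
        · exact h'
      · norm_num at h
    have hBD : B + D = 0 := by
      have : ((c : ℝ) : ℂ) * (B + D) = 0 := by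
        linear_combination h1 - ((c:ℝ):ℂ) * ((c:ℝ):ℂ) * hAzero
      exact (mul_eq_zero.mp this).resolve_left hcne
    have hDB : D - B = 0 := by
      have h3' : Complex.I * ((c : ℝ) : ℂ) * (D - B) = 0 := by
        linear_combination h3 + (Complex.I * ((c:ℝ):ℂ)) * (Complex.I * ((c:ℝ):ℂ)) * hAzero
      have hIc : Complex.I * ((c : ℝ) : ℂ) ≠ 0 := mul_ne_zero Complex.I_ne_zero hcne
      exact (mul_eq_zero.mp h3').resolve_left hIc
    have hBzero : B = 0 := by linear_combination (hBD - hDB) / 2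
    have hDzero : D = 0 := by linear_combination (hBD + hDB) / 2
    rw [hxsum, expand_aux, ← hA, ← hB, ← hD, ← hE, hAzero, hBzero, hDzero, h0]
    ring
  have key' : ∀ x : ExtH H, (inner ℂ (C.toLinearMap x) x : ℂ) = 0 := by
    intro x
    have := key x
    rw [← inner_conj_symm] at this
    simpa using congrArg (starRingEnd ℂ) this
  have := (inner_map_self_eq_zero (C.toLinearMap)).mp key'
  ext x
  exact congrFun (congrArg DFunLike.coe this) x
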